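/- Let ρ_S : ℤ/3 * ℤ/3 → SL(2,ℂ) be a homomorphism from the free product of two cyclic groups of order 3 with generators k₀, k₁, and let ρ_H be its restriction to the subgroup generated by k₀k₁ and k₁k₀ (which is free of rank 2). Then ρ_S is injective if and only if ρ_H is injective. -/

import Mathlib

set_option maxHeartbeats 1000000


open Matrix

/-- The free product `ℤ/3 * ℤ/3`. -/
abbrev Z3Z3 : Type := Monoid.Coprod (Multiplicative (ZMod 3)) (Multiplicative (ZMod 3))

/-- The generator `k₀` of the first free factor. -/
def k₀ : Z3Z3 := Monoid.Coprod.inl (Multiplicative.ofAdd (1 : ZMod 3))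

/-- The generator `k₁` of the second free factor. -/
def k₁ : Z3Z3 := Monoid.Coprod.inr (Multiplicative.ofAdd (1 : ZMod 3))

namespace FaithfulAux

open Monoid Multiplicative Pointwise

abbrev M3 : Type := Multiplicative (ZMod 3)

abbrev Hfam : Bool → Type := fun _ => M3

lemma M3.cube : ∀ x : M3, x ^ 3 = 1 := by decide

lemma M3.sq_ne : ∀ x : M3, x ≠ 1 → x⁻¹ * x⁻¹ ≠ 1 := by decide

/-- Every nonempty reduced word in `C3 * C3` has nontrivial product (ping pong on
the canonical action on words). -/
lemma neword_prod_ne_one {i j : Bool} (w : CoprodI.NeWord Hfam i j) : w.prod ≠ 1 := by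
  classical
  have hid : CoprodI.lift (fun b => (CoprodI.of : Hfam b →* CoprodI Hfam))
      = MonoidHom.id (CoprodI Hfam) := by
    apply CoprodI.ext_hom
    intro b
    ext x
    simp
  let X : Bool → Set (CoprodI.Word Hfam) := fun b => {w | w.fstIdx = some b}
  have hone : (Multiplicative.ofAdd (1 : ZMod 3) : M3) ≠ 1 := by decide
  have hXne : ∀ b, (X b).Nonempty := by
    intro b
    refine ⟨CoprodI.Word.cons (i := b) (Multiplicative.ofAdd (1 : ZMod 3)) CoprodI.Word.empty
      ?_ hone, ?_⟩
    · simp [CoprodI.Word.fstIdx, CoprodI.Word.empty]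
    · exact rfl
  have hXdisj : Pairwise (Function.onFun Disjoint X) := by
    intro a b hab
    simp only [Function.onFun, X]
    rw [Set.disjoint_left]
    rintro w hwa hwb
    simp only [Set.mem_setOf_eq] at hwa hwb
    rw [hwa] at hwb
    exact hab (Option.some.inj hwb)
  have hpp : Pairwise fun a b => ∀ h : Hfam a, h ≠ 1 →
      (CoprodI.of : Hfam a →* CoprodI Hfam) h • X b ⊆ X a := by
    intro a b hab h hh
    rintro w ⟨u, hu, rfl⟩
    simp only [X, Set.mem_setOf_eq] at hu
    have hu' : u.fstIdx ≠ some a := by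
      rw [hu]
      intro hcon
      exact hab (Option.some.inj hcon).symm
    show (CoprodI.of h • u) ∈ X a
    simp only [X, Set.mem_setOf_eq]
    rw [CoprodI.Word.of_smul_def, CoprodI.Word.equivPair_eq_of_fstIdx_ne hu']
    simp only [CoprodI.Word.rcons, mul_one]
    rw [dif_neg hh]
    simp
  have hcard : (3 : Cardinal) ≤ Cardinal.mk Bool ∨ ∃ b, (3 : Cardinal) ≤ Cardinal.mk (Hfam b) := by
    right
    exact ⟨true, by rw [Cardinal.mk_fintype, show Fintype.card M3 = 3 from rfl]; norm_num⟩
  have key := CoprodI.lift_word_prod_nontrivial_of_not_empty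
    (fun b => (CoprodI.of : Hfam b →* CoprodI Hfam)) hcard X hXne hXdisj hpp w
  rw [hid] at key
  simpa using key

lemma last_ne_one : ∀ {i j : Bool} (w : CoprodI.NeWord Hfam i j), w.last ≠ 1 := by
  intro i j w
  induction w with
  | singleton x h => exact h
  | append w₁ hne w₂ ih₁ ih₂ => exact ih₂

/-- A central element of `C3 * C3` whose cube is 1 is trivial. -/
lemma coprodI_eq_one_of_central (g : CoprodI Hfam) (h3 : g ^ 3 = 1)
    (hc : ∀ x, g * x = x * g) : g = 1 := by
  classical
  by_contra hg
  obtain ⟨w, hw⟩ : ∃ w : CoprodI.Word Hfam, w.prod = g :=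
    ⟨g • CoprodI.Word.empty, by rw [CoprodI.Word.prod_smul, CoprodI.Word.prod_empty, mul_one]⟩
  have hne : w ≠ CoprodI.Word.empty := by
    rintro rfl; rw [CoprodI.Word.prod_empty] at hw; exact hg hw.symm
  obtain ⟨i, j, w', hw'⟩ := CoprodI.NeWord.of_word w hne
  have hprod : w'.prod = g := by rw [CoprodI.NeWord.prod, hw', hw]
  by_cases hij : i = j
  · subst hij
    obtain ⟨k, hk⟩ := exists_ne i
    have hx : (ofAdd (1 : ZMod 3) : M3) ≠ 1 := by decide
    have hx' : (ofAdd (1 : ZMod 3) : M3)⁻¹ ≠ 1 := by decide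
    let z : CoprodI.NeWord Hfam k i :=
      .append (.append (.append (.singleton (i := k) (ofAdd (1 : ZMod 3)) hx) hk w')
        (Ne.symm hk) (.singleton (i := k) (ofAdd (1 : ZMod 3))⁻¹ hx')) hk w'.inv
    refine neword_prod_ne_one z ?_
    show z.prod = 1
    simp only [z, CoprodI.NeWord.append_prod, CoprodI.NeWord.prod_singleton,
      CoprodI.NeWord.inv_prod, hprod]
    rw [← hc (CoprodI.of (ofAdd (1 : ZMod 3)))]
    simp [_root_.map_inv, mul_assoc]
  · have hlast : w'.last ≠ 1 := last_ne_one w'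
    have hxx : w'.last⁻¹ * w'.inv.head ≠ 1 := by
      rw [CoprodI.NeWord.inv_head]; exact M3.sq_ne _ hlast
    let B : CoprodI.NeWord Hfam i j := (CoprodI.NeWord.mulHead w'.inv w'.last⁻¹ hxx).inv
    have hB : B.prod = g * CoprodI.of w'.last := by
      simp [B, CoprodI.NeWord.inv_prod, CoprodI.NeWord.mulHead_prod, hprod,
        _root_.mul_inv_rev, _root_.map_inv]
    have hji : j ≠ i := Ne.symm hij
    refine neword_prod_ne_one (CoprodI.NeWord.append (CoprodI.NeWord.append B hji B) hji B) ?_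
    show _ = 1
    simp only [CoprodI.NeWord.append_prod, hB]
    have hcom : Commute g (CoprodI.of w'.last) := hc _
    have cube_expand : ∀ z : CoprodI Hfam, z * z * z = z ^ 3 := fun z => by
      rw [pow_succ, pow_succ, pow_one]
    rw [cube_expand, hcom.mul_pow 3, h3, ← _root_.map_pow, M3.cube, _root_.map_one, one_mul]

/-- Transfer maps between `Z3Z3` and `CoprodI Hfam`. -/
def E : Z3Z3 →* CoprodI Hfam :=
  Coprod.lift (@CoprodI.of Bool Hfam _ false) (@CoprodI.of Bool Hfam _ true)

def E' : CoprodI Hfam →* Z3Z3 :=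
  CoprodI.lift (fun b => match b with
    | false => (Coprod.inl : M3 →* Z3Z3)
    | true => (Coprod.inr : M3 →* Z3Z3))

lemma E'_E (x : Z3Z3) : E' (E x) = x := by
  have h : E'.comp E = MonoidHom.id _ :=
    Coprod.hom_ext (by ext x; simp [E, E']) (by ext x; simp [E, E'])
  exact DFunLike.congr_fun h x

lemma E_E' (y : CoprodI Hfam) : E (E' y) = y := by
  have h : E.comp E' = MonoidHom.id _ :=
    CoprodI.ext_hom _ _ (by rintro (_|_) <;> (ext x; simp [E, E']))
  exact DFunLike.congr_fun h y

lemma z3z3_eq_one_of_central (g : Z3Z3) (h3 : g ^ 3 = 1) (hc : ∀ x, g * x = x * g) :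
    g = 1 := by
  have h := coprodI_eq_one_of_central (E g) (by rw [← _root_.map_pow, h3, _root_.map_one]) (fun y => by
    conv_lhs => rw [← E_E' y]
    conv_rhs => rw [← E_E' y]
    rw [← _root_.map_mul, ← _root_.map_mul, hc])
  have h2 := congrArg E' h
  rwa [E'_E, _root_.map_one] at h2

/-- The homomorphism to `ZMod 3` sending `k₀ ↦ 1`, `k₁ ↦ -1`. -/
def φ : Z3Z3 →* M3 := Coprod.lift (MonoidHom.id M3) invMonoidHom

lemma k0_cube : k₀ ^ 3 = 1 := by
  rw [show k₀ = Monoid.Coprod.inl (ofAdd (1 : ZMod 3)) from rfl, ← _root_.map_pow,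
    show (ofAdd (1 : ZMod 3)) ^ 3 = 1 from by decide, _root_.map_one]

lemma k1_cube : k₁ ^ 3 = 1 := by
  rw [show k₁ = Monoid.Coprod.inr (ofAdd (1 : ZMod 3)) from rfl, ← _root_.map_pow,
    show (ofAdd (1 : ZMod 3)) ^ 3 = 1 from by decide, _root_.map_one]

end FaithfulAux

open FaithfulAux Multiplicative

theorem faithful_iff_faithful_on_free_subgroup
    (ρS : Z3Z3 →* Matrix.SpecialLinearGroup (Fin 2) ℂ) :
    Function.Injective ρS ↔
      Function.Injective
        (fun h : Subgroup.closure ({k₀ * k₁, k₁ * k₀} : Set Z3Z3) => ρS (h : Z3Z3)) := by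
  set Hs : Subgroup Z3Z3 := Subgroup.closure ({k₀ * k₁, k₁ * k₀} : Set Z3Z3) with hHs
  constructor
  · intro hinj h₁ h₂ hh
    exact Subtype.ext (hinj hh)
  · intro hH
    -- basic identities
    have e0 : k₀ * k₀ * k₀ = 1 := by
      have := k0_cube; rwa [pow_succ, pow_succ, pow_one] at this
    have e1 : k₁ * k₁ * k₁ = 1 := by
      have := k1_cube; rwa [pow_succ, pow_succ, pow_one] at this
    have i0 : k₀⁻¹ = k₀ * k₀ := by
      rw [inv_eq_iff_mul_eq_one, ← mul_assoc]; exact e0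
    have i1 : k₁⁻¹ = k₁ * k₁ := by
      rw [inv_eq_iff_mul_eq_one, ← mul_assoc]; exact e1
    have c1' : ∀ x : Z3Z3, k₁ * (k₁ * (k₁ * x)) = x := by
      intro x; rw [← mul_assoc, ← mul_assoc, e1, one_mul]
    have memS₁ : k₀ * k₁ ∈ Hs := Subgroup.subset_closure (Set.mem_insert _ _)
    have memS₂ : k₁ * k₀ ∈ Hs :=
      Subgroup.subset_closure (Set.mem_insert_iff.mpr (Or.inr rfl))
    -- H is normalized by k₀
    have hconj1 : ∀ z ∈ Hs, k₀⁻¹ * z * k₀ ∈ Hs := by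
      intro z hz
      refine Subgroup.closure_induction ?_ ?_ ?_ ?_ hz
      · intro x hx
        simp only [Set.mem_insert_iff, Set.mem_singleton_iff] at hx
        rcases hx with rfl | rfl
        · rw [show k₀⁻¹ * (k₀ * k₁) * k₀ = k₁ * k₀ from by group]
          exact memS₂
        · rw [show k₀⁻¹ * (k₁ * k₀) * k₀ = ((k₀ * k₁) * (k₁ * k₀))⁻¹ from by
            simp only [_root_.mul_inv_rev, i0, i1, mul_assoc, c1']]
          exact inv_mem (mul_mem memS₁ memS₂)
      · simpa using one_mem Hs
      · intro x y hx hy px py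
        rw [show k₀⁻¹ * (x * y) * k₀ = (k₀⁻¹ * x * k₀) * (k₀⁻¹ * y * k₀) from by group]
        exact mul_mem px py
      · intro x hx px
        rw [show k₀⁻¹ * x⁻¹ * k₀ = (k₀⁻¹ * x * k₀)⁻¹ from by group]
        exact inv_mem px
    have hconjpow : ∀ (n : ℕ), ∀ z ∈ Hs, (k₀ ^ n)⁻¹ * z * k₀ ^ n ∈ Hs := by
      intro n
      induction n with
      | zero => intro z hz; simpa using hz
      | succ n ih =>
        intro z hz
        rw [show (k₀ ^ (n + 1))⁻¹ * z * k₀ ^ (n + 1)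
            = k₀⁻¹ * ((k₀ ^ n)⁻¹ * z * k₀ ^ n) * k₀ from by rw [pow_succ]; group]
        exact hconj1 _ (ih z hz)
    -- powers of k₀
    have powval : ∀ a : ZMod 3, k₀ ^ a.val = Monoid.Coprod.inl (ofAdd a) := by
      intro a
      rw [show k₀ = Monoid.Coprod.inl (ofAdd (1 : ZMod 3)) from rfl, ← _root_.map_pow,
        show ∀ a : ZMod 3, (ofAdd (1 : ZMod 3)) ^ a.val = ofAdd a from by decide]
    have valadd : ∀ a b : ZMod 3, k₀ ^ (a + b).val = k₀ ^ a.val * k₀ ^ b.val := by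
      intro a b
      rw [ZMod.val_add, ← pow_add]
      exact (pow_eq_pow_mod _ k0_cube).symm
    -- coset decomposition: every g is k₀^(φ g) * h with h ∈ Hs
    have decomp : ∀ g : Z3Z3, ∃ h ∈ Hs, g = k₀ ^ (toAdd (φ g)).val * h := by
      intro g
      induction g using Monoid.Coprod.induction_on with
      | inl m =>
        refine ⟨1, one_mem _, ?_⟩
        rw [mul_one, show φ (Monoid.Coprod.inl m) = m from by simp [φ], powval, ofAdd_toAdd]
      | inr n =>
        have hφ : φ (Monoid.Coprod.inr n) = n⁻¹ := by simp [φ]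
        have key : ∀ c : ZMod 3, ∃ h ∈ Hs,
            (Monoid.Coprod.inr (ofAdd c) : Z3Z3) = k₀ ^ (-c).val * h := by
          intro c
          rcases (show ∀ c : ZMod 3, c = 0 ∨ c = 1 ∨ c = 2 from by decide) c with
            rfl | rfl | rfl
          · refine ⟨1, one_mem _, ?_⟩
            rw [show ((-(0 : ZMod 3))).val = 0 from by decide, pow_zero, one_mul,
              show (ofAdd (0 : ZMod 3)) = 1 from rfl, _root_.map_one]
          · refine ⟨k₀ * k₁, memS₁, ?_⟩
            rw [show ((-(1 : ZMod 3))).val = 2 from by decide,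
              show k₀ ^ 2 * (k₀ * k₁) = k₀ ^ 3 * k₁ from by group, k0_cube, one_mul]
            rfl
          · refine ⟨(k₁ * k₀)⁻¹, inv_mem memS₂, ?_⟩
            rw [show ((-(2 : ZMod 3))).val = 1 from by decide, pow_one,
              show k₀ * (k₁ * k₀)⁻¹ = k₁⁻¹ from by group,
              show k₁ = Monoid.Coprod.inr (ofAdd (1 : ZMod 3)) from rfl, ← _root_.map_inv]
            congr 1
        obtain ⟨h, hh, heq⟩ := key (toAdd n)
        refine ⟨h, hh, ?_⟩
        rw [hφ, toAdd_inv]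
        rw [ofAdd_toAdd] at heq
        exact heq
      | mul x y hx hy =>
        obtain ⟨h, hh, hxe⟩ := hx
        obtain ⟨h', hh', hye⟩ := hy
        refine ⟨(k₀ ^ (toAdd (φ y)).val)⁻¹ * h * k₀ ^ (toAdd (φ y)).val * h',
          mul_mem (hconjpow _ _ hh) hh', ?_⟩
        rw [_root_.map_mul, toAdd_mul, valadd]
        conv_lhs => rw [hxe, hye]
        group
    have memH : ∀ g : Z3Z3, φ g = 1 → g ∈ Hs := by
      intro g h
      obtain ⟨hh, hmem, heq⟩ := decomp g
      rw [heq, h, show (toAdd (1 : M3)).val = 0 from by decide, pow_zero, one_mul]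
      exact hmem
    -- trivial intersection of ker ρS with Hs
    have htriv : ∀ x ∈ Hs, ρS x = 1 → x = 1 := by
      intro x hx h1
      have := hH (a₁ := ⟨x, hx⟩) (a₂ := ⟨1, one_mem _⟩)
        (by show ρS x = ρS 1; rw [h1, _root_.map_one])
      exact congrArg Subtype.val this
    have hker : ∀ x : Z3Z3, φ x = 1 → ρS x = 1 → x = 1 := fun x h1 h2 =>
      htriv x (memH x h1) h2
    rw [injective_iff_map_eq_one]
    intro g hg
    have hcent : ∀ x : Z3Z3, g * x = x * g := by
      intro x
      have h1 : φ (g * x * g⁻¹ * x⁻¹) = 1 := by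
        simp only [_root_.map_mul, _root_.map_inv]
        rw [mul_comm (φ g) (φ x)]
        group
      have h2 : ρS (g * x * g⁻¹ * x⁻¹) = 1 := by
        simp [_root_.map_mul, _root_.map_inv, hg]
      have h3 := hker _ h1 h2
      have e1' : g * x * g⁻¹ = x := by
        have := mul_inv_eq_one.mp h3
        exact this
      calc g * x = (g * x * g⁻¹) * g := by group
        _ = x * g := by rw [e1']
    have h3 : g ^ 3 = 1 :=
      hker _ (by rw [_root_.map_pow]; exact M3.cube _) (by rw [_root_.map_pow, hg, one_pow])
    exact z3z3_eq_one_of_central g h3 hcent
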